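/- Let A, C, σ, Ra be strictly positive real parameters. Then the Glukhovsky–Dolzhansky system has no nonconstant polynomial first integral; that is, every polynomial f ∈ ℝ[x,y,z] satisfying X(f) = 0 is a constant polynomial. -/

import Mathlib

open MvPolynomial

/-- The derivation associated with the Glukhovsky–Dolzhansky system
`ẋ = A y z + C z − σ x, ẏ = −x z + Ra − y, ż = −z + x y`,
acting on `ℝ[x,y,z]` (variables `X 0 = x`, `X 1 = y`, `X 2 = z`). -/
noncomputable def gdDeriv (A C σ Ra : ℝ) (f : MvPolynomial (Fin 3) ℝ) :
    MvPolynomial (Fin 3) ℝ :=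
  (MvPolynomial.C A * X 1 * X 2 + MvPolynomial.C C * X 2 - MvPolynomial.C σ * X 0) *
      pderiv (0 : Fin 3) f
    + (-(X 0 * X 2) + MvPolynomial.C Ra - X 1) * pderiv (1 : Fin 3) f
    + (-X 2 + X 0 * X 1) * pderiv (2 : Fin 3) f

namespace GDaux


lemma coeff_pderiv' {σ : Type*} [DecidableEq σ] (i : σ) (f : MvPolynomial σ ℝ) (m : σ →₀ ℕ) :
    coeff m (pderiv i f) = (m i + 1 : ℝ) * coeff (m + Finsupp.single i 1) f := by
  induction f using MvPolynomial.induction_on' with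
  | monomial s a =>
    rw [pderiv_monomial, coeff_monomial, coeff_monomial]
    rcases Nat.eq_zero_or_pos (s i) with h | h
    · have h1 : ¬ s = m + Finsupp.single i 1 := by
        intro he; rw [he] at h; simp at h
      simp [h, h1]
    · have key : s - Finsupp.single i 1 = m ↔ s = m + Finsupp.single i 1 := by
        constructor
        · intro he; rw [← he]; ext j
          rcases eq_or_ne j i with rfl | hj
          · simp [Nat.sub_add_cancel h]
          · simp [Finsupp.single_apply, hj.symm, Ne.symm hj]
        · intro he; rw [he]; ext j
          rcases eq_or_ne j i with rfl | hj
          · simp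
          · simp [Finsupp.single_apply, Ne.symm hj]
      split_ifs with h1 h2 h2
      · have h3 := key.mp h1
        have : s i = m i + 1 := by rw [h3]; simp
        push_cast [this]; ring
      · exact absurd (key.mp h1) h2
      · exact absurd (key.mpr h2) h1
      · ring
  | add p q hp hq => simp only [map_add, coeff_add, hp, hq]; ring

noncomputable def M3 (a b c : ℕ) : Fin 3 →₀ ℕ :=
  Finsupp.single 0 a + Finsupp.single 1 b + Finsupp.single 2 c

@[simp] lemma M3_apply0 (a b c : ℕ) : M3 a b c 0 = a := by
  simp [M3, Finsupp.single_apply]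
@[simp] lemma M3_apply1 (a b c : ℕ) : M3 a b c 1 = b := by
  simp [M3, Finsupp.single_apply]
@[simp] lemma M3_apply2 (a b c : ℕ) : M3 a b c 2 = c := by
  simp [M3, Finsupp.single_apply]

@[simp] lemma M3_add0 (a b c : ℕ) : M3 a b c + Finsupp.single 0 1 = M3 (a+1) b c := by
  ext j; fin_cases j <;> simp [M3, Finsupp.single_apply]
@[simp] lemma M3_add1 (a b c : ℕ) : M3 a b c + Finsupp.single 1 1 = M3 a (b+1) c := by
  ext j; fin_cases j <;> simp [M3, Finsupp.single_apply]
@[simp] lemma M3_add2 (a b c : ℕ) : M3 a b c + Finsupp.single 2 1 = M3 a b (c+1) := by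
  ext j; fin_cases j <;> simp [M3, Finsupp.single_apply]

@[simp] lemma M3_sub0 (a b c : ℕ) : M3 (a+1) b c - Finsupp.single 0 1 = M3 a b c := by
  ext j; fin_cases j <;> simp [M3, Finsupp.single_apply]
@[simp] lemma M3_sub1 (a b c : ℕ) : M3 a (b+1) c - Finsupp.single 1 1 = M3 a b c := by
  ext j; fin_cases j <;> simp [M3, Finsupp.single_apply]
@[simp] lemma M3_sub2 (a b c : ℕ) : M3 a b (c+1) - Finsupp.single 2 1 = M3 a b c := by
  ext j; fin_cases j <;> simp [M3, Finsupp.single_apply]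

@[simp] lemma M3_mem0 (a b c : ℕ) : ((0:Fin 3) ∈ (M3 a b c).support) ↔ a ≠ 0 := by
  simp [Finsupp.mem_support_iff]
@[simp] lemma M3_mem1 (a b c : ℕ) : ((1:Fin 3) ∈ (M3 a b c).support) ↔ b ≠ 0 := by
  simp [Finsupp.mem_support_iff]
@[simp] lemma M3_mem2 (a b c : ℕ) : ((2:Fin 3) ∈ (M3 a b c).support) ↔ c ≠ 0 := by
  simp [Finsupp.mem_support_iff]

noncomputable def Fc (f : MvPolynomial (Fin 3) ℝ) (a b c : ℕ) : ℝ := coeff (M3 a b c) f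



def MRel (A C σ Ra : ℝ) (F : ℕ → ℕ → ℕ → ℝ) : Prop :=
  ∀ a b c : ℕ,
    (if 1 ≤ b ∧ 1 ≤ c then A * (a+1) * F (a+1) (b-1) (c-1) else 0)
  + (if 1 ≤ c then C * (a+1) * F (a+1) b (c-1) else 0)
  - σ * a * F a b c
  + Ra * (b+1) * F a (b+1) c
  - b * F a b c - c * F a b c
  - (if 1 ≤ a ∧ 1 ≤ c then (b+1) * F (a-1) (b+1) (c-1) else 0)
  + (if 1 ≤ a ∧ 1 ≤ b then (c+1) * F (a-1) (b-1) (c+1) else 0) = 0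

variable {A C σ Ra : ℝ} {F : ℕ → ℕ → ℕ → ℝ}

section Rot
variable (hM : MRel A C σ Ra F) (a : ℕ)
  (h1 : ∀ b c, F (a+1) b c = 0) (h2 : ∀ b c, F (a+2) b c = 0)
include hM h1 h2

lemma rot1 : ∀ b c : ℕ, ((b:ℝ)+2) * F a (b+2) c = ((c:ℝ)+2) * F a b (c+2) := by
  intro b c
  have h := hM (a+1) (b+1) (c+1)
  simp only [show a+1+1 = a+2 from rfl, h1, h2, Nat.add_sub_cancel,
    le_add_iff_nonneg_left, zero_le, and_self, if_true, true_and, Nat.le_add_left,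
    Nat.succ_sub_one, if_pos] at h
  push_cast at h
  linarith

lemma rot2 : ∀ b : ℕ, F a b 1 = 0 := by
  intro b
  have h := hM (a+1) (b+1) 0
  simp only [show a+1+1 = a+2 from rfl, h1, h2, Nat.add_sub_cancel,
    Nat.le_zero, Nat.succ_ne_zero, and_false, false_and, and_true, true_and,
    if_false, Nat.le_add_left, Nat.succ_sub_one, and_self, if_pos,
    le_add_iff_nonneg_left, zero_le] at h
  push_cast at h
  linarith

lemma rot3 : ∀ c : ℕ, F a 1 c = 0 := by
  intro c
  have h := hM (a+1) 0 (c+1)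
  simp only [show a+1+1 = a+2 from rfl, h1, h2, Nat.add_sub_cancel,
    Nat.le_zero, Nat.succ_ne_zero, and_false, false_and, and_true, true_and,
    if_false, Nat.le_add_left, Nat.succ_sub_one, and_self, if_pos,
    le_add_iff_nonneg_left, zero_le] at h
  push_cast at h
  linarith

lemma oddc : ∀ k b : ℕ, F a b (2*k+1) = 0 := by
  intro k
  induction k with
  | zero => intro b; simpa using rot2 hM a h1 h2 b
  | succ k ih =>
    intro b
    have h := rot1 hM a h1 h2 b (2*k+1)
    rw [ih (b+2)] at h
    have h2' : (2*(k+1)+1 : ℕ) = 2*k+1+2 := by ring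
    rw [h2']
    have hne : ((2*k+1 : ℕ):ℝ) + 2 ≠ 0 := by positivity
    have h' := h.symm
    rw [mul_zero] at h'
    exact (mul_eq_zero.mp h').resolve_left hne

lemma oddb : ∀ k c : ℕ, F a (2*k+1) c = 0 := by
  intro k
  induction k with
  | zero => intro c; simpa using rot3 hM a h1 h2 c
  | succ k ih =>
    intro c
    have h := rot1 hM a h1 h2 (2*k+1) c
    rw [ih (c+2)] at h
    have h2' : (2*(k+1)+1 : ℕ) = 2*k+1+2 := by ring
    rw [h2']
    have hne : ((2*k+1 : ℕ):ℝ) + 2 ≠ 0 := by positivity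
    rw [mul_zero] at h
    exact (mul_eq_zero.mp h).resolve_left hne

lemma evenstruct : ∀ p q : ℕ, F a (2*p) (2*q) = (Nat.choose (p+q) p : ℝ) * F a 0 (2*(p+q)) := by
  intro p
  induction p with
  | zero => intro q; simp
  | succ p ih =>
    intro q
    have h := rot1 hM a h1 h2 (2*p) (2*q)
    have e1 : (2*p+2 : ℕ) = 2*(p+1) := by ring
    have e2 : (2*q+2 : ℕ) = 2*(q+1) := by ring
    rw [e1, e2, ih (q+1)] at h
    have key := Nat.choose_succ_right_eq (p+q+1) p
    have key' : ((p+q+1).choose (p+1) : ℝ) * (p+1) = ((p+q+1).choose p : ℝ) * (q+1) := by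
      have h3 : p+q+1-p = q+1 := by omega
      rw [h3] at key
      exact_mod_cast congrArg (Nat.cast : ℕ → ℝ) key
    have hne : ((2*p:ℕ):ℝ) + 2 ≠ 0 := by positivity
    have e3 : (p+1+q) = p+q+1 := by ring
    have e4 : (p+(q+1)) = p+q+1 := by ring
    rw [e3]
    rw [e4] at h
    apply mul_left_cancel₀ hne
    rw [h]
    push_cast
    push_cast at key'
    linear_combination (-2 * F a 0 (2*(p+q+1))) * key'

end Rot

/-- circle-average weights -/
noncomputable def w (b c : ℕ) : ℝ :=
  if b % 2 = 0 ∧ c % 2 = 0 then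
    (Nat.factorial b * Nat.factorial c : ℝ) / (Nat.factorial (b/2) * Nat.factorial (c/2))
  else 0

lemma w_nonneg (b c : ℕ) : 0 ≤ w b c := by
  unfold w
  split_ifs with h
  · positivity
  · exact le_refl 0

lemma w_even_pos (b c : ℕ) (hb : b % 2 = 0) (hc : c % 2 = 0) : 0 < w b c := by
  unfold w
  rw [if_pos ⟨hb, hc⟩]
  have := Nat.factorial_pos b
  have := Nat.factorial_pos c
  have := Nat.factorial_pos (b/2)
  have := Nat.factorial_pos (c/2)
  positivity

lemma w_odd_left (b c : ℕ) (hb : b % 2 = 1) : w b c = 0 := by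
  unfold w; rw [if_neg]; simp [hb]

lemma w_odd_right (b c : ℕ) (hc : c % 2 = 1) : w b c = 0 := by
  unfold w; rw [if_neg]; intro h; omega

lemma w_id (b c : ℕ) : ((c:ℝ)+1) * w (b+2) c = ((b:ℝ)+1) * w b (c+2) := by
  rcases Nat.even_or_odd b with hb | hb
  · rcases Nat.even_or_odd c with hc | hc
    · obtain ⟨p, rfl⟩ := hb
      obtain ⟨q, rfl⟩ := hc
      have hb2 : (p + p + 2) % 2 = 0 := by omega
      have hc2 : (q + q + 2) % 2 = 0 := by omega
      have hb0 : (p + p) % 2 = 0 := by omega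
      have hc0 : (q + q) % 2 = 0 := by omega
      unfold w
      rw [if_pos ⟨hb2, hc0⟩, if_pos ⟨hb0, hc2⟩]
      have e1 : (p+p+2)/2 = p+1 := by omega
      have e2 : (q+q+2)/2 = q+1 := by omega
      have e3 : (p+p)/2 = p := by omega
      have e4 : (q+q)/2 = q := by omega
      rw [e1, e2, e3, e4]
      have f1 : (p+p+2) = (p+p+1)+1 := by ring
      have f2 : (q+q+2) = (q+q+1)+1 := by ring
      rw [f1, f2]
      simp only [Nat.factorial_succ]
      have hfp := Nat.factorial_pos p
      have hfq := Nat.factorial_pos q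
      have hfpp := Nat.factorial_pos (p+p)
      have hfqq := Nat.factorial_pos (q+q)
      have hp : ((Nat.factorial p : ℝ)) ≠ 0 := by positivity
      have hq : ((Nat.factorial q : ℝ)) ≠ 0 := by positivity
      push_cast
      field_simp
      ring
    · obtain ⟨q, rfl⟩ := hc
      rw [w_odd_right _ _ (by omega), w_odd_right _ _ (by omega)]
      ring
  · obtain ⟨p, rfl⟩ := hb
    rw [w_odd_left _ _ (by omega), w_odd_left _ _ (by omega)]
    ring


/-- the two boundary-flux sequences -/
noncomputable def Uf (F : ℕ → ℕ → ℕ → ℝ) (a m b : ℕ) : ℝ :=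
  w b (m-b) * (if 1 ≤ a ∧ 1 ≤ m-b then ((b:ℝ)+1) * F (a-1) (b+1) (m-b-1) else 0)

noncomputable def Vf (F : ℕ → ℕ → ℕ → ℝ) (a m b : ℕ) : ℝ :=
  w b (m-b) * (if 1 ≤ a ∧ 1 ≤ b then (((m-b:ℕ):ℝ)+1) * F (a-1) (b-1) (m-b+1) else 0)

lemma UV_tel (F : ℕ → ℕ → ℕ → ℝ) (a m b : ℕ) (hb : b + 2 ≤ m) :
    Vf F a m (b+2) = Uf F a m b := by
  obtain ⟨c, hc⟩ : ∃ c, m - b = c + 2 := ⟨m-b-2, by omega⟩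
  have e1 : m - (b+2) = c := by omega
  have e2 : m - (b+2) + 1 = c + 1 := by omega
  have e3 : m - b - 1 = c + 1 := by omega
  have e4 : (1:ℕ) ≤ m - b := by omega
  have e5 : (b+2) - 1 = b + 1 := by omega
  unfold Vf Uf
  rw [e1, e3, e5, hc]
  by_cases ha : 1 ≤ a
  · rw [if_pos ⟨ha, by omega⟩, if_pos ⟨ha, by omega⟩]
    linear_combination (F (a-1) (b+1) (c+1)) * w_id b c
  · rw [if_neg (by tauto), if_neg (by tauto)]
    ring

lemma U_top (F : ℕ → ℕ → ℕ → ℝ) (a m : ℕ) : Uf F a m m = 0 := by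
  unfold Uf
  rw [if_neg (by omega)]
  ring

lemma U_top' (F : ℕ → ℕ → ℕ → ℝ) (a m : ℕ) (hm : 1 ≤ m) : Uf F a m (m-1) = 0 := by
  unfold Uf
  have : m - (m-1) = 1 := by omega
  rw [this, w_odd_right _ _ (by omega)]
  ring

lemma V_bot (F : ℕ → ℕ → ℕ → ℝ) (a m : ℕ) : Vf F a m 0 = 0 := by
  unfold Vf
  rw [if_neg (by omega)]
  ring

lemma V_bot' (F : ℕ → ℕ → ℕ → ℝ) (a m : ℕ) : Vf F a m 1 = 0 := by
  unfold Vf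
  rw [w_odd_left _ _ (by omega)]
  ring

lemma UV_sum (F : ℕ → ℕ → ℕ → ℝ) (a m : ℕ) :
    ∑ b ∈ Finset.range (m+1), Vf F a m b = ∑ b ∈ Finset.range (m+1), Uf F a m b := by
  rcases m with _ | n
  · simp [V_bot, U_top]
  · rw [Finset.sum_range_succ' _ (n+1), Finset.sum_range_succ' _ n,
        Finset.sum_range_succ _ (n+1), Finset.sum_range_succ _ n]
    rw [V_bot, V_bot', U_top]
    have hU : Uf F a (n+1) n = 0 := by
      have h := U_top' F a (n+1) (by omega)
      rwa [show (n+1) - 1 = n from by omega] at h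
    rw [hU]
    rw [Finset.sum_congr rfl (fun k hk => by
      exact UV_tel F a (n+1) k (by have := Finset.mem_range.mp hk; omega))]

section Main
variable {A C σ Ra : ℝ} {F : ℕ → ℕ → ℕ → ℝ}
variable (hM : MRel A C σ Ra F) (a : ℕ)
  (h1 : ∀ b c, F (a+1) b c = 0) (h2 : ∀ b c, F (a+2) b c = 0)
include hM h1 h2

lemma wsum (m : ℕ) :
    (σ*a + m) * ∑ b ∈ Finset.range (m+1), w b (m-b) * F a b (m-b) = 0 := by
  rw [Finset.mul_sum]
  have key : ∀ b ∈ Finset.range (m+1),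
      (σ*a + m) * (w b (m-b) * F a b (m-b)) = Vf F a m b - Uf F a m b := by
    intro b hb
    have hble : b ≤ m := by
      have := Finset.mem_range.mp hb; omega
    have h := hM a b (m-b)
    simp only [h1, mul_zero, ite_self] at h
    have hzero : w b (m-b) * (Ra * ((b:ℝ)+1) * F a (b+1) (m-b)) = 0 := by
      rcases Nat.even_or_odd b with hbe | hbo
      · obtain ⟨p, rfl⟩ := hbe
        have e : p + p + 1 = 2*p+1 := by ring
        rw [e, oddb hM a h1 h2 p _]
        ring
      · obtain ⟨p, rfl⟩ := hbo
        rw [w_odd_left _ _ (by omega)]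
        ring
    have hcast : ((m-b:ℕ):ℝ) = (m:ℝ) - (b:ℝ) := Nat.cast_sub hble
    unfold Vf Uf
    linear_combination (-(w b (m-b))) * h + hzero - (w b (m-b) * F a b (m-b)) * hcast
  rw [Finset.sum_congr rfl key, Finset.sum_sub_distrib, UV_sum]
  ring


lemma slice_kill (hσ : 0 < σ) (ha : 1 ≤ a) : ∀ b c, F a b c = 0 := by
  have hS : ∀ m : ℕ, ∑ b ∈ Finset.range (m+1), w b (m-b) * F a b (m-b) = 0 := by
    intro m
    have h := wsum hM a h1 h2 m
    have hpos : 0 < σ*(a:ℝ) + m := by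
      have h1a : (1:ℝ) ≤ (a:ℝ) := by exact_mod_cast ha
      nlinarith [Nat.cast_nonneg (α := ℝ) m]
    exact (mul_eq_zero.mp h).resolve_left hpos.ne'
  have htop : ∀ j : ℕ, F a 0 (2*j) = 0 := by
    intro j
    have hS' := hS (2*j)
    have heq : ∀ b ∈ Finset.range (2*j+1), w b (2*j-b) * F a b (2*j-b)
        = (if b % 2 = 0 then w b (2*j-b) * ((j.choose (b/2) : ℕ) : ℝ) else 0) * F a 0 (2*j) := by
      intro b hb
      have hble : b ≤ 2*j := by have := Finset.mem_range.mp hb; omega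
      rcases Nat.even_or_odd b with hbe | hbo
      · obtain ⟨p, rfl⟩ := hbe
        have e1 : p + p = 2*p := by ring
        have e2 : 2*j - (p+p) = 2*(j-p) := by omega
        have e3 : p + (j - p) = j := by omega
        have e4 : (p+p) % 2 = 0 := by omega
        have e5 : (p+p)/2 = p := by omega
        rw [if_pos e4, e5]
        rw [e2, e1, evenstruct hM a h1 h2 p (j-p), e3]
        ring
      · obtain ⟨p, rfl⟩ := hbo
        rw [if_neg (by omega), w_odd_left _ _ (by omega)]
        ring
    rw [Finset.sum_congr rfl heq, ← Finset.sum_mul] at hS'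
    have hTpos : 0 < ∑ b ∈ Finset.range (2*j+1),
        (if b % 2 = 0 then w b (2*j-b) * ((j.choose (b/2) : ℕ) : ℝ) else 0) := by
      apply Finset.sum_pos' (fun b _ => by
        split_ifs with hb
        · have := w_nonneg b (2*j-b)
          positivity
        · exact le_refl 0)
      refine ⟨0, Finset.mem_range.mpr (by omega), ?_⟩
      rw [if_pos (by omega)]
      simp only [Nat.zero_div, Nat.choose_zero_right, Nat.cast_one, mul_one, Nat.sub_zero]
      exact w_even_pos 0 (2*j) (by omega) (by omega)
    exact (mul_eq_zero.mp hS').resolve_left hTpos.ne'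
  intro b c
  rcases Nat.even_or_odd b with hbe | hbo
  · rcases Nat.even_or_odd c with hce | hco
    · obtain ⟨p, rfl⟩ := hbe
      obtain ⟨q, rfl⟩ := hce
      rw [show p + p = 2*p from by ring, show q + q = 2*q from by ring,
        evenstruct hM a h1 h2 p q, htop (p+q)]
      ring
    · obtain ⟨q, rfl⟩ := hco
      exact oddc hM a h1 h2 q b
  · obtain ⟨p, rfl⟩ := hbo
    exact oddb hM a h1 h2 p c

end Main

section Zero
variable {A C σ Ra : ℝ} {F : ℕ → ℕ → ℕ → ℝ}
variable (hM : MRel A C σ Ra F)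
  (h1 : ∀ b c, F 1 b c = 0) (h2 : ∀ b c, F 2 b c = 0)
include hM h1 h2

lemma slice0 : ∀ b c : ℕ, b + c ≠ 0 → F 0 b c = 0 := by
  have h1' : ∀ b c, F (0+1) b c = 0 := h1
  have h2' : ∀ b c, F (0+2) b c = 0 := h2
  intro b c hbc
  rcases Nat.even_or_odd b with hbe | hbo
  · rcases Nat.even_or_odd c with hce | hco
    · have h := hM 0 b c
      simp only [show (0:ℕ)+1 = 1 from rfl, h1, mul_zero, ite_self,
        Nat.lt_irrefl, Nat.not_succ_le_zero, false_and, and_false, if_false,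
        Nat.cast_zero, mul_zero, zero_mul, sub_zero, add_zero, zero_add] at h
      rw [if_neg (by omega : ¬((1:ℕ) ≤ 0 ∧ 1 ≤ c)),
          if_neg (by omega : ¬((1:ℕ) ≤ 0 ∧ 1 ≤ b))] at h
      have hb1 : F 0 (b+1) c = 0 := by
        obtain ⟨p, rfl⟩ := hbe
        rw [show p + p + 1 = 2*p+1 from by ring]
        exact oddb hM 0 h1' h2' p c
      rw [hb1] at h
      have hpos : (0:ℝ) < (b:ℝ) + (c:ℝ) := by
        have : 0 < b + c := Nat.pos_of_ne_zero hbc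
        exact_mod_cast this
      have : ((b:ℝ) + c) * F 0 b c = 0 := by linarith
      exact (mul_eq_zero.mp this).resolve_left hpos.ne'
    · obtain ⟨q, rfl⟩ := hco
      exact oddc hM 0 h1' h2' q b
  · obtain ⟨p, rfl⟩ := hbo
    exact oddb hM 0 h1' h2' p c

end Zero

theorem core {A C σ Ra : ℝ} {F : ℕ → ℕ → ℕ → ℝ} (hσ : 0 < σ)
    (hM : MRel A C σ Ra F) (N : ℕ) (hdeg : ∀ a b c : ℕ, N < a → F a b c = 0) :
    ∀ a b c : ℕ, a + b + c ≠ 0 → F a b c = 0 := by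
  have slices : ∀ k a, 1 ≤ a → N + 1 ≤ a + k → ∀ b c, F a b c = 0 := by
    intro k
    induction k with
    | zero => intro a ha hN b c; exact hdeg a b c (by omega)
    | succ k ih =>
      intro a ha hN b c
      have h1 : ∀ b c, F (a+1) b c = 0 := fun b c => ih (a+1) (by omega) (by omega) b c
      have h2 : ∀ b c, F (a+2) b c = 0 := fun b c => ih (a+2) (by omega) (by omega) b c
      exact slice_kill hM a h1 h2 hσ ha b c
  have hps : ∀ a, 1 ≤ a → ∀ b c, F a b c = 0 := fun a ha => slices (N+1) a ha (by omega)
  intro a b c habc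
  rcases a with _ | a
  · exact slice0 hM (hps 1 le_rfl) (hps 2 (by omega)) b c (by omega)
  · exact hps (a+1) (by omega) b c

section Master
variable (A C σ Ra : ℝ) (f : MvPolynomial (Fin 3) ℝ)

lemma master (hf : gdDeriv A C σ Ra f = 0) (a b c : ℕ) :
    (if 1 ≤ b ∧ 1 ≤ c then A * (a+1) * Fc f (a+1) (b-1) (c-1) else 0)
  + (if 1 ≤ c then C * (a+1) * Fc f (a+1) b (c-1) else 0)
  - σ * a * Fc f a b c
  + Ra * (b+1) * Fc f a (b+1) c
  - b * Fc f a b c - c * Fc f a b c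
  - (if 1 ≤ a ∧ 1 ≤ c then (b+1) * Fc f (a-1) (b+1) (c-1) else 0)
  + (if 1 ≤ a ∧ 1 ≤ b then (c+1) * Fc f (a-1) (b-1) (c+1) else 0) = 0 := by
  have hre : gdDeriv A C σ Ra f =
      ((MvPolynomial.C A * pderiv (0:Fin 3) f) * X 1) * X 2
    + (MvPolynomial.C C * pderiv (0:Fin 3) f) * X 2
    - (MvPolynomial.C σ * pderiv (0:Fin 3) f) * X 0
    - ((pderiv (1:Fin 3) f) * X 0) * X 2
    + MvPolynomial.C Ra * pderiv (1:Fin 3) f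
    - (pderiv (1:Fin 3) f) * X 1
    - (pderiv (2:Fin 3) f) * X 2
    + ((pderiv (2:Fin 3) f) * X 0) * X 1 := by
    rw [gdDeriv]; ring
  have h0 := congrArg (coeff (M3 a b c)) (hre ▸ hf)
  rw [coeff_zero] at h0
  rcases a with _ | a <;> rcases b with _ | b <;> rcases c with _ | c <;>
  · simp only [coeff_add, coeff_sub, coeff_mul_X', coeff_C_mul, coeff_pderiv',
      M3_mem0, M3_mem1, M3_mem2, M3_sub0, M3_sub1, M3_sub2, M3_add0, M3_add1, M3_add2,
      M3_apply0, M3_apply1, M3_apply2, Fc, ne_eq, Nat.succ_ne_zero, not_false_eq_true,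
      if_true, if_false, Nat.zero_lt_succ, Nat.add_sub_cancel,
      not_true_eq_false, true_and, and_true, false_and, and_false, and_self,
      Nat.le_zero, Nat.le_refl, le_add_iff_nonneg_left, zero_le, Nat.one_le_iff_ne_zero] at h0 ⊢
    push_cast at h0 ⊢
    linarith [h0]

end Master

lemma fc_mrel (A C σ Ra : ℝ) (f : MvPolynomial (Fin 3) ℝ) (hf : gdDeriv A C σ Ra f = 0) :
    MRel A C σ Ra (Fc f) := by
  intro a b c
  exact master A C σ Ra f hf a b c

lemma fc_degbound (f : MvPolynomial (Fin 3) ℝ) :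
    ∀ a b c : ℕ, f.totalDegree < a → Fc f a b c = 0 := by
  intro a b c h
  apply MvPolynomial.coeff_eq_zero_of_totalDegree_lt
  have hsum : ∑ i ∈ (M3 a b c).support, M3 a b c i = a + b + c := by
    rw [Finset.sum_subset (Finset.subset_univ _)
      (fun x _ hx => by simpa [Finsupp.mem_support_iff] using hx)]
    rw [Fin.sum_univ_three]
    simp
  omega

lemma M3_eta (m : Fin 3 →₀ ℕ) : M3 (m 0) (m 1) (m 2) = m := by
  ext j; fin_cases j <;> simp

lemma M3_zero : M3 0 0 0 = 0 := by
  ext j; fin_cases j <;> simp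

end GDaux

/-- For positive parameters, every polynomial first integral of the
Glukhovsky–Dolzhansky system is constant. -/
theorem gd_no_polynomial_first_integral
    (A C σ Ra : ℝ) (hA : 0 < A) (hC : 0 < C) (hσ : 0 < σ) (hRa : 0 < Ra)
    (f : MvPolynomial (Fin 3) ℝ) (hf : gdDeriv A C σ Ra f = 0) :
    ∃ c : ℝ, f = MvPolynomial.C c := by
  refine ⟨MvPolynomial.coeff 0 f, ?_⟩
  have hcore := GDaux.core hσ (GDaux.fc_mrel A C σ Ra f hf) f.totalDegree (GDaux.fc_degbound f)
  apply MvPolynomial.ext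
  intro m
  rcases eq_or_ne m 0 with rfl | hm
  · simp
  · rw [MvPolynomial.coeff_C, if_neg (Ne.symm hm)]
    have hsum : m 0 + m 1 + m 2 ≠ 0 := by
      intro h0
      apply hm
      rw [← GDaux.M3_eta m]
      have : m 0 = 0 ∧ m 1 = 0 ∧ m 2 = 0 := by omega
      rw [this.1, this.2.1, this.2.2, GDaux.M3_zero]
    have := hcore (m 0) (m 1) (m 2) hsum
    rwa [GDaux.Fc, GDaux.M3_eta] at this
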